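/- Let η: ℝ → ℂ satisfy Re η ≤ 0, η(u) ≠ 0 for u ≠ 0, and 1/|η| integrable on {|u| ≥ c} for all c > 0. Then lim_{q↓0} ∫_ℝ |q/(q - η(u))| du = 0. -/
import Mathlib


open MeasureTheory Filter

theorem stmt_10 (η : ℝ → ℂ) (hmeas : Measurable η)
    (hre : ∀ u : ℝ, (η u).re ≤ 0)
    (hne : ∀ u : ℝ, u ≠ 0 → η u ≠ 0)
    (hint : ∀ c : ℝ, 0 < c → IntegrableOn (fun u : ℝ => 1 / ‖η u‖) {u : ℝ | c ≤ |u|}) :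
    Tendsto (fun q : ℝ => ∫ u : ℝ, ‖(q : ℂ) / ((q : ℂ) - η u)‖)
      (nhdsWithin 0 (Set.Ioi 0)) (nhds 0) := by
  set g : ℝ → ℝ := fun u => min 1 (1 / ‖η u‖) with hg
  have hgmeas : Measurable g := measurable_const.min (measurable_const.div hmeas.norm)
  -- key bounds on the denominator
  have hden1 : ∀ (q : ℝ), 0 < q → ∀ u, q ≤ ‖(q : ℂ) - η u‖ := by
    intro q hq u
    have h : ((q : ℂ) - η u).re = q - (η u).re := by simp
    calc q ≤ ((q : ℂ) - η u).re := by rw [h]; linarith [hre u]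
    _ ≤ ‖(q : ℂ) - η u‖ := Complex.re_le_norm _
  have hden2 : ∀ (q : ℝ), 0 < q → ∀ u, ‖η u‖ ≤ ‖(q : ℂ) - η u‖ := by
    intro q hq u
    have h1 : Complex.normSq (η u) ≤ Complex.normSq ((q : ℂ) - η u) := by
      simp only [Complex.normSq_apply, Complex.sub_re, Complex.sub_im, Complex.ofReal_re,
        Complex.ofReal_im]
      nlinarith [hre u]
    have h2 := Real.sqrt_le_sqrt h1
    simpa [Complex.norm_def] using h2
  -- a.e. every point is nonzero
  have hae : ∀ᵐ u : ℝ, u ≠ 0 := by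
    rw [ae_iff]
    simp only [not_not, Set.setOf_eq_eq_singleton]
    exact measure_singleton 0
  -- integrability of the bound
  have hgint : Integrable g := by
    have h1 : IntegrableOn g (Set.Icc (-1 : ℝ) 1) := by
      refine Measure.integrableOn_of_bounded (M := 1) measure_Icc_lt_top.ne
        hgmeas.aestronglyMeasurable ?_
      refine ae_of_all _ fun u => ?_
      have h0 : (0 : ℝ) ≤ g u := le_min zero_le_one (by positivity)
      rw [Real.norm_eq_abs, abs_of_nonneg h0]
      exact min_le_left _ _
    have h2 : IntegrableOn g {u : ℝ | 1 ≤ |u|} := by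
      apply (hint 1 one_pos).mono' hgmeas.aestronglyMeasurable.restrict
      refine ae_of_all _ fun u => ?_
      have h0 : (0 : ℝ) ≤ g u := le_min zero_le_one (by positivity)
      rw [Real.norm_eq_abs, abs_of_nonneg h0]
      exact min_le_right _ _
    have hcover : (Set.univ : Set ℝ) ⊆ Set.Icc (-1 : ℝ) 1 ∪ {u : ℝ | 1 ≤ |u|} := by
      intro u _
      rcases le_or_gt (|u|) 1 with h | h
      · exact Or.inl (abs_le.mp h)
      · exact Or.inr h.le
    have h3 := (h1.union h2).mono_set hcover
    rwa [integrableOn_univ] at h3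
  have key := MeasureTheory.tendsto_integral_filter_of_dominated_convergence
    (μ := volume) (l := nhdsWithin (0 : ℝ) (Set.Ioi 0))
    (F := fun q : ℝ => fun u : ℝ => ‖(q : ℂ) / ((q : ℂ) - η u)‖)
    (f := fun _ : ℝ => (0 : ℝ)) g
    (Eventually.of_forall fun q : ℝ =>
      ((measurable_const.div (measurable_const.sub hmeas)).norm).aestronglyMeasurable)
    ?_ hgint ?_
  · simpa using key
  · -- bound
    have hmem : Set.Ioo (0 : ℝ) 1 ∈ nhdsWithin (0 : ℝ) (Set.Ioi 0) :=
      mem_nhdsWithin.mpr ⟨Set.Iio 1, isOpen_Iio, by norm_num, fun x hx => ⟨hx.2, hx.1⟩⟩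
    filter_upwards [hmem] with q hq
    filter_upwards [hae] with u hu
    have hηne : η u ≠ 0 := hne u hu
    have hd1 := hden1 q hq.1 u
    have hd2 := hden2 q hq.1 u
    have hdpos : 0 < ‖(q : ℂ) - η u‖ := lt_of_lt_of_le hq.1 hd1
    rw [Real.norm_eq_abs, abs_of_nonneg (norm_nonneg _), norm_div]
    refine le_min ?_ ?_
    · rw [div_le_one hdpos]
      simpa [abs_of_pos hq.1] using hd1
    · have hηpos : 0 < ‖η u‖ := norm_pos_iff.mpr hηne
      rw [div_le_div_iff₀ hdpos hηpos, one_mul]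
      calc ‖(q : ℂ)‖ * ‖η u‖ ≤ 1 * ‖η u‖ := by
            refine mul_le_mul_of_nonneg_right ?_ (norm_nonneg _)
            simpa [abs_of_pos hq.1] using hq.2.le
      _ = ‖η u‖ := one_mul _
      _ ≤ ‖(q : ℂ) - η u‖ := hd2
  · -- pointwise limit
    filter_upwards [hae] with u hu
    have hηne : η u ≠ 0 := hne u hu
    have hd : ((0 : ℝ) : ℂ) - η u ≠ 0 := by
      push_cast
      simpa using hηne
    have hcont : Tendsto (fun q : ℝ => (q : ℂ) / ((q : ℂ) - η u)) (nhds 0)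
        (nhds (((0 : ℝ) : ℂ) / (((0 : ℝ) : ℂ) - η u))) :=
      Tendsto.div (Complex.continuous_ofReal.tendsto 0)
        ((Complex.continuous_ofReal.tendsto 0).sub tendsto_const_nhds) hd
    have h := (hcont.mono_left (nhdsWithin_le_nhds (s := Set.Ioi (0:ℝ)))).norm
    simpa using h
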